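/- arXiv:1308.4153 — 3 statements merged into one kernel-verified Lean document; each statement's English description precedes it below -/
import Mathlib

section
/- For any n ≥ 1 and positive reals X₁, ..., Xₙ, the integral over the positive orthant ∫_{[0,∞)^n} n!·X₁⋯Xₙ / (1 + a₁X₁ + ⋯ + aₙXₙ)^{n+1} da₁⋯daₙ equals 1. -/
open MeasureTheory Set Filter Topology

lemma oneDim_deriv (t X : ℝ) (ht : 0 < t) (hX : 0 < X) (m : ℕ) {x : ℝ} (hx : x ∈ Set.Ici (0:ℝ)) :
    HasDerivAt (fun x : ℝ => -(((m:ℝ)+1))⁻¹ * ((t + x * X) ^ (m+1))⁻¹)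
      (X / (t + x * X) ^ (m + 2)) x := by
  have hu : 0 < t + x * X := by
    have : 0 ≤ x * X := mul_nonneg hx hX.le
    linarith
  have h1 : HasDerivAt (fun x : ℝ => t + x * X) X x := by
    simpa using ((hasDerivAt_id x).mul_const X).const_add t
  have h2 : HasDerivAt (fun x : ℝ => (t + x * X) ^ (m+1))
      (((m:ℝ)+1) * (t + x * X) ^ m * X) x := by
    have := h1.fun_pow (m+1)
    simpa [Nat.add_sub_cancel] using this
  have h3 := (h2.fun_inv (by positivity)).const_mul (-(((m:ℝ)+1))⁻¹)
  refine h3.congr_deriv ?_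
  have hm : ((m:ℝ)+1) ≠ 0 := by positivity
  field_simp
  ring_nf

lemma oneDim_tendsto (t X : ℝ) (ht : 0 < t) (hX : 0 < X) (m : ℕ) :
    Tendsto (fun x : ℝ => -(((m:ℝ)+1))⁻¹ * ((t + x * X) ^ (m+1))⁻¹) atTop (𝓝 0) := by
  have h1 : Tendsto (fun x : ℝ => t + x * X) atTop atTop :=
    tendsto_atTop_add_const_left _ t (Tendsto.atTop_mul_const hX tendsto_id)
  have h2 : Tendsto (fun x : ℝ => ((t + x * X) ^ (m+1))⁻¹) atTop (𝓝 0) :=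
    ((tendsto_pow_atTop (Nat.succ_ne_zero m)).comp h1).inv_tendsto_atTop
  simpa using h2.const_mul (-(((m:ℝ)+1))⁻¹)

lemma oneDim_lint (t X : ℝ) (ht : 0 < t) (hX : 0 < X) (m : ℕ) :
    ∫⁻ x in Set.Ici (0:ℝ), ENNReal.ofReal (X / (t + x * X) ^ (m + 2)) =
      ENNReal.ofReal (1 / (((m:ℝ)+1) * t ^ (m+1))) := by
  rw [← Measure.restrict_congr_set Ioi_ae_eq_Ici]
  have hnn : ∀ x ∈ Set.Ioi (0:ℝ), 0 ≤ X / (t + x * X) ^ (m + 2) := by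
    intro x hx
    have : 0 < t + x * X := by nlinarith [hx.out]
    positivity
  have hderiv := fun x (hx : x ∈ Set.Ici (0:ℝ)) => oneDim_deriv t X ht hX m hx
  have hint : IntegrableOn (fun x => X / (t + x * X) ^ (m + 2)) (Set.Ioi (0:ℝ)) :=
    integrableOn_Ioi_deriv_of_nonneg' hderiv hnn (oneDim_tendsto t X ht hX m)
  rw [← ofReal_integral_eq_lintegral_ofReal hint
    ((ae_restrict_mem measurableSet_Ioi).mono (fun x hx => hnn x hx))]
  congr 1
  rw [integral_Ioi_of_hasDerivAt_of_nonneg' hderiv hnn (oneDim_tendsto t X ht hX m)]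
  simp
  field_simp

lemma restrict_pi_eq (n : ℕ) :
    (volume : Measure (Fin n → ℝ)).restrict (Set.univ.pi fun _ => Set.Ici (0:ℝ)) =
      Measure.pi (fun _ : Fin n => (volume : Measure ℝ).restrict (Set.Ici 0)) := by
  refine (Measure.pi_eq (μ := fun _ : Fin n => (volume : Measure ℝ).restrict (Set.Ici 0)) fun s hs => ?_).symm
  rw [Measure.restrict_apply (MeasurableSet.univ_pi hs), ← Set.pi_inter_distrib, volume_pi,
    Measure.pi_pi]
  exact Finset.prod_congr rfl fun i _ => (Measure.restrict_apply (hs i)).symm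

lemma key (n : ℕ) : ∀ (k : ℕ) (X : Fin n → ℝ), (∀ i, 0 < X i) → ∀ t : ℝ, 0 < t →
    ∫⁻ a : Fin n → ℝ in Set.univ.pi (fun _ => Set.Ici (0:ℝ)),
      ENNReal.ofReal ((∏ i, X i) / (t + ∑ i, a i * X i) ^ (n + k + 1)) =
      ENNReal.ofReal ((k.factorial : ℝ) / ((n+k).factorial * t ^ (k+1))) := by
  induction n with
  | zero =>
    intro k X hX t ht
    simp only [Finset.univ_eq_empty, Finset.prod_empty, Finset.sum_empty, add_zero, zero_add]
    rw [restrict_pi_eq 0]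
    rw [lintegral_const]
    rw [Measure.pi_empty_univ, mul_one]
    congr 1
    have : (0:ℝ) < k.factorial := by positivity
    field_simp
  | succ n ih =>
    intro k X hX t ht
    have hmeas : ∀ (m : ℕ) (c t' : ℝ) (Y : Fin m → ℝ) (p : ℕ),
        Measurable fun y : Fin m → ℝ => ENNReal.ofReal (c / (t' + ∑ j, y j * Y j) ^ p) := by
      intro m c t' Y p
      refine ENNReal.measurable_ofReal.comp (Measurable.div measurable_const ?_)
      exact ((Finset.univ.measurable_sum fun j _ =>
        (measurable_pi_apply (X := fun _ => ℝ) j).mul_const (Y j)).const_add t').pow_const p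
    rw [restrict_pi_eq (n+1)]
    set μ : Fin (n+1) → Measure ℝ := fun _ => (volume : Measure ℝ).restrict (Set.Ici 0) with hμ
    have hemb := (MeasurableEquiv.piFinSuccAbove (fun _ : Fin (n+1) => ℝ) 0).symm.measurableEmbedding
    rw [← ((measurePreserving_piFinSuccAbove μ 0).symm).lintegral_comp_emb hemb]
    rw [lintegral_prod]
    case hf =>
      exact ((hmeas (n+1) _ t X (n+1+k+1)).comp hemb.measurable).aemeasurable
    simp only [MeasurableEquiv.piFinSuccAbove_symm_apply, Fin.insertNthEquiv, Equiv.coe_fn_mk,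
      Fin.insertNth_zero, Fin.sum_univ_succ, Fin.prod_univ_succ, Fin.cons_zero, Fin.cons_succ,
      Fin.zero_succAbove, Fin.cast_eq_self, cast_eq]
    have hexp : n+1+k+1 = n+(k+1)+1 := by omega
    have hC : ∀ᵐ x ∂(μ 0),
        (∫⁻ (y : Fin n → ℝ),
          ENNReal.ofReal
            ((X 0 * ∏ i : Fin n, X i.succ) /
              (t + (x * X 0 + ∑ j : Fin n, y j * X j.succ)) ^ (n + 1 + k + 1))
            ∂Measure.pi fun j => μ j.succ) =
        ENNReal.ofReal (((k+1).factorial : ℝ) / ((n+k+1).factorial)) *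
          ENNReal.ofReal (X 0 / (t + x * X 0) ^ (k + 2)) := by
      rw [hμ]
      filter_upwards [ae_restrict_mem measurableSet_Ici] with x hx
      have hx0 : 0 < t + x * X 0 := by nlinarith [hX 0, hx.out]
      have step1 : (∫⁻ (y : Fin n → ℝ),
          ENNReal.ofReal
            ((X 0 * ∏ i : Fin n, X i.succ) /
              (t + (x * X 0 + ∑ j : Fin n, y j * X j.succ)) ^ (n + 1 + k + 1))
            ∂Measure.pi fun j => μ j.succ) =
          ∫⁻ (y : Fin n → ℝ), ENNReal.ofReal (X 0) * ENNReal.ofReal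
            ((∏ i : Fin n, X i.succ) /
              ((t + x * X 0) + ∑ j : Fin n, y j * X j.succ) ^ (n + (k+1) + 1))
            ∂Measure.pi fun j => μ j.succ := by
        refine lintegral_congr fun y => ?_
        rw [← ENNReal.ofReal_mul (hX 0).le, ← mul_div_assoc, ← add_assoc, hexp]
      rw [step1, lintegral_const_mul _ (hmeas n _ _ _ _)]
      have : (Measure.pi fun j : Fin n => μ j.succ) =
          (volume : Measure (Fin n → ℝ)).restrict (Set.univ.pi fun _ => Set.Ici 0) := by
        rw [hμ, restrict_pi_eq n]
      rw [this, ih (k+1) (fun j => X j.succ) (fun j => hX _) (t + x * X 0) hx0]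
      rw [← ENNReal.ofReal_mul (hX 0).le, ← ENNReal.ofReal_mul (by positivity)]
      congr 1
      have h1 : (0:ℝ) < (n+k+1).factorial := by positivity
      have h2 : (0:ℝ) < (t + x * X 0) ^ (k+2) := by positivity
      have hnk : n + (k+1) = n + k + 1 := by omega
      rw [hnk]
      field_simp
    rw [lintegral_congr_ae hC, lintegral_const_mul _ ?hm]
    case hm =>
      refine ENNReal.measurable_ofReal.comp (Measurable.div measurable_const ?_)
      exact ((measurable_id.mul_const (X 0)).const_add t).pow_const _
    have : (μ 0) = (volume : Measure ℝ).restrict (Set.Ici 0) := by rw [hμ]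
    rw [this, oneDim_lint t (X 0) ht (hX 0) k]
    rw [← ENNReal.ofReal_mul (by positivity)]
    congr 1
    have h1 : (0:ℝ) < (n+k+1).factorial := by positivity
    have h2 : (0:ℝ) < (k:ℝ)+1 := by positivity
    have hnk : n + 1 + k = n + k + 1 := by omega
    rw [hnk, Nat.factorial_succ]
    push_cast
    field_simp

theorem stmt7 (n : ℕ) (hn : 1 ≤ n) (X : Fin n → ℝ) (hX : ∀ i, 0 < X i) :
    ∫ a in Set.univ.pi (fun _ : Fin n => Set.Ici (0 : ℝ)),
        (n.factorial : ℝ) * (∏ i, X i) / (1 + ∑ i, a i * X i) ^ (n + 1) = 1 := by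
  have hsum : Measurable fun a : Fin n → ℝ => (1 + ∑ i, a i * X i) ^ (n+1) :=
    ((Finset.univ.measurable_sum fun j _ =>
      (measurable_pi_apply (X := fun _ => ℝ) j).mul_const (X j)).const_add 1).pow_const _
  have hm : Measurable fun a : Fin n → ℝ =>
      (n.factorial : ℝ) * (∏ i, X i) / (1 + ∑ i, a i * X i) ^ (n + 1) :=
    measurable_const.div hsum
  have hnn : 0 ≤ᵐ[(volume : Measure (Fin n → ℝ)).restrict
      (Set.univ.pi fun _ => Set.Ici (0:ℝ))]
      fun a => (n.factorial : ℝ) * (∏ i, X i) / (1 + ∑ i, a i * X i) ^ (n + 1) := by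
    filter_upwards [ae_restrict_mem (MeasurableSet.univ_pi fun _ => measurableSet_Ici)]
      with a ha
    have hs : 0 ≤ ∑ i, a i * X i :=
      Finset.sum_nonneg fun i _ => mul_nonneg (ha i (Set.mem_univ i)) (hX i).le
    have hd : (0:ℝ) < (1 + ∑ i, a i * X i) ^ (n+1) := by positivity
    have hnum : (0:ℝ) ≤ (n.factorial : ℝ) * ∏ i, X i := by
      have : (0:ℝ) < ∏ i, X i := Finset.prod_pos fun i _ => hX i
      positivity
    exact div_nonneg hnum hd.le
  rw [MeasureTheory.integral_eq_lintegral_of_nonneg_ae hnn hm.aestronglyMeasurable]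
  have hsplit : ∀ a : Fin n → ℝ,
      ENNReal.ofReal ((n.factorial : ℝ) * (∏ i, X i) / (1 + ∑ i, a i * X i) ^ (n + 1)) =
      ENNReal.ofReal (n.factorial : ℝ) *
        ENNReal.ofReal ((∏ i, X i) / (1 + ∑ i, a i * X i) ^ (n + 1)) := by
    intro a
    rw [mul_div_assoc, ENNReal.ofReal_mul (by positivity)]
  simp_rw [hsplit]
  have hmeas2 : Measurable fun a : Fin n → ℝ =>
      ENNReal.ofReal ((∏ i, X i) / (1 + ∑ i, a i * X i) ^ (n + 1)) :=
    ENNReal.measurable_ofReal.comp (measurable_const.div hsum)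
  rw [lintegral_const_mul _ hmeas2]
  have hk := key n 0 X hX 1 one_pos
  simp only [Nat.add_zero, Nat.factorial_zero, Nat.cast_one, one_pow, mul_one, one_div] at hk
  rw [hk, ← ENNReal.ofReal_mul (by positivity)]
  have hfac : (0:ℝ) < n.factorial := by positivity
  rw [mul_inv_cancel₀ hfac.ne']
  simp
end

section
/- Let ℓ be a positive integer and x₁, x₂ > 0 real. Then lim_{m→∞} ∑_{a₁ ≥ mℓ, a₂ ≥ 1} 2m·x₁x₂/(m + a₁x₁ + a₂x₂)³ = 1/(1 + ℓx₁), where the double sum is over integer pairs (a₁, a₂) with a₁ ≥ mℓ and a₂ ≥ 1. -/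
open Filter

open Topology in
lemma tele {F : ℕ → ℝ} (hmono : ∀ n, F (n+1) ≤ F n) (h0 : Tendsto F atTop (nhds 0)) :
    HasSum (fun n => F n - F (n+1)) (F 0) := by
  rw [hasSum_iff_tendsto_nat_of_nonneg (fun n => sub_nonneg.2 (hmono n))]
  simp_rw [Finset.sum_range_sub' F]
  simpa using tendsto_const_nhds.sub h0

lemma affine_atTop {d x : ℝ} (hx : 0 < x) :
    Tendsto (fun a : ℕ => d + a * x) atTop atTop :=
  tendsto_atTop_add_const_left _ d ((tendsto_natCast_atTop_atTop).atTop_mul_const hx)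

lemma Fk_tendsto {d x : ℝ} (hx : 0 < x) (k : ℕ) (hk : 0 < k) (b : ℝ) (hb : 0 < b) :
    Tendsto (fun a : ℕ => 1 / (b * (d + a * x) ^ k)) atTop (nhds 0) := by
  simp_rw [one_div]
  exact (((tendsto_pow_atTop hk.ne').comp (affine_atTop hx)).const_mul_atTop hb).inv_tendsto_atTop


lemma diff3 {s x : ℝ} (hs : 0 < s) (hx : 0 < x) :
    x / (s + x)^3 ≤ 1/(2*s^2) - 1/(2*(s+x)^2) ∧ 1/(2*s^2) - 1/(2*(s+x)^2) ≤ x / s^3 := by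
  have ht : 0 < s + x := by linarith
  have heq : 1/(2*s^2) - 1/(2*(s+x)^2) = x*(2*s+x) / (2*s^2*(s+x)^2) := by
    field_simp; ring
  rw [heq]
  have k1 : 0 < x * (s+x)^2 * (3*s*x + x^2) := by positivity
  have k2 : 0 < x * s^2 * (3*s*x + 2*x^2) := by positivity
  constructor
  · rw [div_le_div_iff₀ (by positivity) (by positivity)]; nlinarith [k1]
  · rw [div_le_div_iff₀ (by positivity) (by positivity)]; nlinarith [k2]

lemma diff2 {s x : ℝ} (hs : 0 < s) (hx : 0 < x) :
    x / (s + x)^2 ≤ 1/s - 1/(s+x) ∧ 1/s - 1/(s+x) ≤ x / s^2 := by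
  have ht : 0 < s + x := by linarith
  have heq : 1/s - 1/(s+x) = x / (s*(s+x)) := by field_simp; ring
  rw [heq]
  have k1 : 0 < x * (s+x) * x := by positivity
  have k2 : 0 < x * s * x := by positivity
  constructor
  · rw [div_le_div_iff₀ (by positivity) (by positivity)]; nlinarith [k1]
  · rw [div_le_div_iff₀ (by positivity) (by positivity)]; nlinarith [k2]

lemma inner_bounds {c x : ℝ} (hc : 0 < c) (hx : 0 < x) :
    Summable (fun a : ℕ => x / (c + ((a:ℝ)+1)*x)^3) ∧
    1/(2*(c+x)^2) ≤ (∑' a : ℕ, x / (c + ((a:ℝ)+1)*x)^3) ∧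
    (∑' a : ℕ, x / (c + ((a:ℝ)+1)*x)^3) ≤ 1/(2*c^2) := by
  set F : ℕ → ℝ := fun a => 1 / (2 * (c + a*x)^2) with hF
  have hpos : ∀ a : ℕ, 0 < c + (a:ℝ)*x := fun a =>
    add_pos_of_pos_of_nonneg hc (by positivity)
  have hFs : ∀ a : ℕ, F a = 1 / (2 * (c + (a:ℝ)*x)^2) := fun a => rfl
  have key : ∀ a : ℕ, F (a+1) - F (a+2) ≤ x / (c + ((a:ℝ)+1)*x)^3 ∧
      x / (c + ((a:ℝ)+1)*x)^3 ≤ F a - F (a+1) := by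
    intro a
    have h1 := (diff3 (hpos a) hx).1
    have h2 := (diff3 (hpos a) hx).2
    have h1' := (diff3 (hpos (a+1)) hx).1
    have e1 : c + ((a:ℝ)+1)*x = (c + (a:ℝ)*x) + x := by ring
    have e2 : F a = 1/(2*(c + (a:ℝ)*x)^2) := rfl
    have e3 : F (a+1) = 1/(2*((c + (a:ℝ)*x)+x)^2) := by
      rw [hFs (a+1)]; push_cast; ring_nf
    have e4 : F (a+2) = 1/(2*((c + ((a:ℝ)+1)*x)+x)^2) := by
      rw [hFs (a+2)]; push_cast; ring_nf
    have e5 : c + ((a:ℝ)+1)*x = (c + ((a:ℝ)+1)*x) := rfl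
    have hq : 0 < c + ((a:ℝ)+1)*x := by
      have := hpos (a+1); push_cast at this; exact this
    have e6 : F (a+1) = 1/(2*(c + ((a:ℝ)+1)*x)^2) := by
      rw [hFs (a+1)]; push_cast; ring_nf
    constructor
    · rw [e6, e4]
      exact (diff3 hq hx).2
    · rw [e2, e3, e1]
      exact h1
  have hmono : ∀ a, F (a+1) ≤ F a := by
    intro a
    have h := (key a).1
    have h2 := (key a).2
    have hfx : 0 < x / (c + ((a:ℝ)+1)*x)^3 := by
      have := hpos (a+1); push_cast at this
      positivity
    linarith [(key a).2, hfx]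
  have h0 : Tendsto F atTop (nhds 0) := Fk_tendsto hx 2 (by norm_num) 2 (by norm_num)
  have hD := tele hmono h0
  have hD1 : HasSum (fun a => F (a+1) - F (a+2)) (F 1) := by
    have := tele (F := fun a => F (a+1)) (fun n => hmono (n+1))
      (h0.comp (tendsto_add_atTop_nat 1))
    simpa using this
  have hnn : ∀ a : ℕ, 0 ≤ x / (c + ((a:ℝ)+1)*x)^3 := by
    intro a
    have := hpos (a+1); push_cast at this
    positivity
  have hsum : Summable (fun a : ℕ => x / (c + ((a:ℝ)+1)*x)^3) :=
    Summable.of_nonneg_of_le hnn (fun a => (key a).2) hD.summable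
  refine ⟨hsum, ?_, ?_⟩
  · have := Summable.tsum_le_tsum (fun a => (key a).1) hD1.summable hsum
    rw [hD1.tsum_eq] at this
    calc 1/(2*(c+x)^2) = F 1 := by rw [hFs 1]; norm_num
    _ ≤ _ := this
  · have := Summable.tsum_le_tsum (fun a => (key a).2) hsum hD.summable
    rw [hD.tsum_eq] at this
    calc (∑' a : ℕ, x / (c + ((a:ℝ)+1)*x)^3) ≤ F 0 := this
    _ = 1/(2*c^2) := by rw [hFs 0]; norm_num

lemma outer_bounds {d x : ℝ} (hd : 0 < d) (hx : 0 < x) :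
    Summable (fun a : ℕ => x / (d + (a:ℝ)*x)^2) ∧
    1/d ≤ (∑' a : ℕ, x / (d + (a:ℝ)*x)^2) ∧
    (∑' a : ℕ, x / (d + (a:ℝ)*x)^2) ≤ x/d^2 + 1/d := by
  set F : ℕ → ℝ := fun a => 1 / (d + a*x) with hF
  have hpos : ∀ a : ℕ, 0 < d + (a:ℝ)*x := fun a =>
    add_pos_of_pos_of_nonneg hd (by positivity)
  have hFs : ∀ a : ℕ, F a = 1 / (d + (a:ℝ)*x) := fun a => rfl
  have key : ∀ a : ℕ, F a - F (a+1) ≤ x / (d + (a:ℝ)*x)^2 ∧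
      x / (d + ((a:ℝ)+1)*x)^2 ≤ F a - F (a+1) := by
    intro a
    have e1 : F (a+1) = 1/((d + (a:ℝ)*x) + x) := by
      rw [hFs (a+1)]; push_cast; ring_nf
    have e2 : d + ((a:ℝ)+1)*x = (d + (a:ℝ)*x) + x := by ring
    rw [hFs a, e1, e2]
    exact ⟨(diff2 (hpos a) hx).2, (diff2 (hpos a) hx).1⟩
  have hnn : ∀ a : ℕ, 0 ≤ x / (d + (a:ℝ)*x)^2 := by
    intro a; have := hpos a; positivity
  have hmono : ∀ a, F (a+1) ≤ F a := by
    intro a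
    have h2 := (key a).2
    have : 0 ≤ x / (d + ((a:ℝ)+1)*x)^2 := by
      have := hpos (a+1); push_cast at this; positivity
    linarith
  have h0 : Tendsto F atTop (nhds 0) := by
    have := Fk_tendsto (d := d) hx 1 (by norm_num) 1 (by norm_num)
    simp only [pow_one, one_mul] at this
    simpa [hF, one_div] using this
  have hD := tele hmono h0
  have hsum1 : Summable (fun a : ℕ => x / (d + ((a:ℝ)+1)*x)^2) :=
    Summable.of_nonneg_of_le (fun a => by
      have := hpos (a+1); push_cast at this; positivity)
      (fun a => (key a).2) hD.summable
  have hsum : Summable (fun a : ℕ => x / (d + (a:ℝ)*x)^2) := by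
    rw [← summable_nat_add_iff 1]
    convert hsum1 using 2 with a
    · rfl
    · push_cast; ring_nf
  refine ⟨hsum, ?_, ?_⟩
  · have := Summable.tsum_le_tsum (fun a => (key a).1) hD.summable hsum
    rw [hD.tsum_eq] at this
    calc 1/d = F 0 := by rw [hFs 0]; norm_num
    _ ≤ _ := this
  · have hsplit : (∑' a : ℕ, x / (d + (a:ℝ)*x)^2)
        = x / (d + (0:ℝ)*x)^2 + ∑' a : ℕ, x / (d + ((a:ℝ)+1)*x)^2 := by
      rw [Summable.tsum_eq_zero_add hsum]
      norm_num
    rw [hsplit]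
    have h2 : (∑' a : ℕ, x / (d + ((a:ℝ)+1)*x)^2) ≤ F 0 := by
      rw [← hD.tsum_eq]
      exact Summable.tsum_le_tsum (fun a => (key a).2) hsum1 hD.summable
    have : F 0 = 1/d := by rw [hFs 0]; norm_num
    rw [this] at h2
    have : x / (d + (0:ℝ)*x)^2 = x/d^2 := by norm_num
    rw [this]
    linarith

theorem stmt10 (ℓ : ℕ) (hℓ : 0 < ℓ) (x₁ x₂ : ℝ) (hx₁ : 0 < x₁) (hx₂ : 0 < x₂) :
    Tendsto (fun m : ℕ =>
        ∑' a₁ : ℕ, ∑' a₂ : ℕ,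
          2 * (m : ℝ) * x₁ * x₂ /
            ((m : ℝ) + ((a₁ : ℝ) + (m * ℓ : ℕ)) * x₁ + ((a₂ : ℝ) + 1) * x₂) ^ 3) atTop
      (nhds (1 / (1 + ℓ * x₁))) := by
  set A : ℝ := 1 + ℓ * x₁ with hA
  have hA0 : 0 < A := by positivity
  have main : ∀ m : ℕ, 1 ≤ m →
      (m:ℝ)/((m:ℝ)*A + x₂) ≤ (∑' a₁ : ℕ, ∑' a₂ : ℕ,
          2 * (m : ℝ) * x₁ * x₂ /
            ((m : ℝ) + ((a₁ : ℝ) + (m * ℓ : ℕ)) * x₁ + ((a₂ : ℝ) + 1) * x₂) ^ 3) ∧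
      (∑' a₁ : ℕ, ∑' a₂ : ℕ,
          2 * (m : ℝ) * x₁ * x₂ /
            ((m : ℝ) + ((a₁ : ℝ) + (m * ℓ : ℕ)) * x₁ + ((a₂ : ℝ) + 1) * x₂) ^ 3)
        ≤ x₁/((m:ℝ)*A^2) + 1/A := by
    intro m hm
    have hm0 : (0:ℝ) < m := by exact_mod_cast hm
    set d : ℝ := m * A with hd
    have hd0 : 0 < d := by positivity
    set d' : ℝ := d + x₂ with hd'
    have hd'0 : 0 < d' := by positivity
    have hcalc : ∀ s : ℝ, 2*(m:ℝ)*x₁ * (1/(2*s^2)) = (m:ℝ)*(x₁/s^2) := by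
      intro s
      rw [mul_one_div, show 2*(m:ℝ)*x₁ = 2*((m:ℝ)*x₁) by ring,
        mul_div_mul_left _ _ (two_ne_zero), mul_div_assoc]
    have cpos : ∀ a₁ : ℕ, 0 < d + (a₁:ℝ) * x₁ := fun a₁ =>
      add_pos_of_pos_of_nonneg hd0 (by positivity)
    have c'pos : ∀ a₁ : ℕ, 0 < d' + (a₁:ℝ) * x₁ := fun a₁ =>
      add_pos_of_pos_of_nonneg hd'0 (by positivity)
    -- rewrite inner sums
    have hTrw : ∀ a₁ : ℕ, (∑' a₂ : ℕ,
          2 * (m : ℝ) * x₁ * x₂ /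
            ((m : ℝ) + ((a₁ : ℝ) + (m * ℓ : ℕ)) * x₁ + ((a₂ : ℝ) + 1) * x₂) ^ 3)
        = 2*(m:ℝ)*x₁ * ∑' a₂ : ℕ, x₂ / ((d + (a₁:ℝ)*x₁) + ((a₂:ℝ)+1)*x₂)^3 := by
      intro a₁
      rw [← tsum_mul_left]
      congr 1 with a₂
      have : (m : ℝ) + ((a₁ : ℝ) + (m * ℓ : ℕ)) * x₁ = d + (a₁:ℝ)*x₁ := by
        push_cast [hd, hA]; ring
      rw [this, mul_div_assoc]
    have lowT : ∀ a₁ : ℕ, (m:ℝ) * (x₁ / (d' + (a₁:ℝ)*x₁)^2) ≤ (∑' a₂ : ℕ,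
          2 * (m : ℝ) * x₁ * x₂ /
            ((m : ℝ) + ((a₁ : ℝ) + (m * ℓ : ℕ)) * x₁ + ((a₂ : ℝ) + 1) * x₂) ^ 3) := by
      intro a₁
      rw [hTrw a₁]
      have h := (inner_bounds (cpos a₁) hx₂).2.1
      have h2 : 2*(m:ℝ)*x₁ * (1/(2*((d + (a₁:ℝ)*x₁)+x₂)^2))
          ≤ 2*(m:ℝ)*x₁ * ∑' a₂ : ℕ, x₂ / ((d + (a₁:ℝ)*x₁) + ((a₂:ℝ)+1)*x₂)^3 :=
        mul_le_mul_of_nonneg_left h (by positivity)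
      calc (m:ℝ) * (x₁ / (d' + (a₁:ℝ)*x₁)^2)
          = 2*(m:ℝ)*x₁ * (1/(2*((d + (a₁:ℝ)*x₁)+x₂)^2)) := by
            rw [hcalc, hd']; ring_nf
        _ ≤ _ := h2
    have hiT : ∀ a₁ : ℕ, (∑' a₂ : ℕ,
          2 * (m : ℝ) * x₁ * x₂ /
            ((m : ℝ) + ((a₁ : ℝ) + (m * ℓ : ℕ)) * x₁ + ((a₂ : ℝ) + 1) * x₂) ^ 3)
        ≤ (m:ℝ) * (x₁ / (d + (a₁:ℝ)*x₁)^2) := by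
      intro a₁
      rw [hTrw a₁]
      have h := (inner_bounds (cpos a₁) hx₂).2.2
      have h2 : 2*(m:ℝ)*x₁ * ∑' a₂ : ℕ, x₂ / ((d + (a₁:ℝ)*x₁) + ((a₂:ℝ)+1)*x₂)^3
          ≤ 2*(m:ℝ)*x₁ * (1/(2*(d + (a₁:ℝ)*x₁)^2)) :=
        mul_le_mul_of_nonneg_left h (by positivity)
      calc _ ≤ 2*(m:ℝ)*x₁ * (1/(2*(d + (a₁:ℝ)*x₁)^2)) := h2
        _ = (m:ℝ) * (x₁ / (d + (a₁:ℝ)*x₁)^2) := hcalc _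
    obtain ⟨hSo, hlo_o, hhi_o⟩ := outer_bounds hd0 hx₁
    obtain ⟨hSo', hlo_o', _⟩ := outer_bounds hd'0 hx₁
    have hsumT : Summable (fun a₁ : ℕ => ∑' a₂ : ℕ,
          2 * (m : ℝ) * x₁ * x₂ /
            ((m : ℝ) + ((a₁ : ℝ) + (m * ℓ : ℕ)) * x₁ + ((a₂ : ℝ) + 1) * x₂) ^ 3) := by
      apply Summable.of_nonneg_of_le ?_ hiT (hSo.mul_left (m:ℝ))
      intro a₁
      refine le_trans ?_ (lowT a₁)
      positivity
    constructor
    · have h1 : (∑' a₁ : ℕ, (m:ℝ) * (x₁ / (d' + (a₁:ℝ)*x₁)^2)) ≤ _ :=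
        Summable.tsum_le_tsum lowT (hSo'.mul_left (m:ℝ)) hsumT
      rw [tsum_mul_left] at h1
      have h2 : (m:ℝ) * (1/d') ≤ (m:ℝ) * ∑' a₁ : ℕ, x₁ / (d' + (a₁:ℝ)*x₁)^2 :=
        mul_le_mul_of_nonneg_left hlo_o' hm0.le
      calc (m:ℝ)/((m:ℝ)*A + x₂) = (m:ℝ) * (1/d') := by rw [hd', hd]; ring
        _ ≤ _ := le_trans h2 h1
    · have h1 : _ ≤ (∑' a₁ : ℕ, (m:ℝ) * (x₁ / (d + (a₁:ℝ)*x₁)^2)) :=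
        Summable.tsum_le_tsum hiT hsumT (hSo.mul_left (m:ℝ))
      rw [tsum_mul_left] at h1
      have h2 : (m:ℝ) * ∑' a₁ : ℕ, x₁ / (d + (a₁:ℝ)*x₁)^2 ≤ (m:ℝ) * (x₁/d^2 + 1/d) :=
        mul_le_mul_of_nonneg_left hhi_o hm0.le
      have h3 : (m:ℝ) * (x₁/d^2 + 1/d) = x₁/((m:ℝ)*A^2) + 1/A := by
        rw [hd]; field_simp
      rw [h3] at h2
      exact le_trans h1 (le_trans (le_refl _) h2)
  -- limits of the two bounding sequences
  have hlo : Tendsto (fun m : ℕ => (m:ℝ)/((m:ℝ)*A + x₂)) atTop (nhds (1/A)) := by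
    have hz : Tendsto (fun m : ℕ => x₂/(m:ℝ)) atTop (nhds 0) :=
      Tendsto.div_atTop tendsto_const_nhds tendsto_natCast_atTop_atTop
    have h1 : Tendsto (fun m : ℕ => A + x₂/(m:ℝ)) atTop (nhds A) := by
      simpa using (tendsto_const_nhds (x := A) (f := atTop)).add hz
    have h2 := h1.inv₀ hA0.ne'
    rw [show (1/A : ℝ) = A⁻¹ from one_div A]
    apply h2.congr'
    filter_upwards [eventually_ge_atTop 1] with m hm
    have hm0 : (0:ℝ) < m := by exact_mod_cast hm
    have h3 : (0:ℝ) < A + x₂/(m:ℝ) := by positivity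
    have h4 : (0:ℝ) < (m:ℝ)*A + x₂ := by positivity
    rw [inv_eq_one_div, div_eq_div_iff h3.ne' h4.ne']
    field_simp
  have hhi : Tendsto (fun m : ℕ => x₁/((m:ℝ)*A^2) + 1/A) atTop (nhds (1/A)) := by
    have h1 : Tendsto (fun m : ℕ => x₁/((m:ℝ)*A^2)) atTop (nhds 0) :=
      Tendsto.div_atTop tendsto_const_nhds
        (tendsto_natCast_atTop_atTop.atTop_mul_const (by positivity))
    simpa using h1.add (tendsto_const_nhds (x := 1/A) (f := atTop))
  have hgoal : (1:ℝ) / (1 + ℓ * x₁) = 1/A := by rw [hA]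
  rw [hgoal]
  refine tendsto_of_tendsto_of_tendsto_of_le_of_le' hlo hhi ?_ ?_
  · filter_upwards [eventually_ge_atTop 1] with m hm using (main m hm).1
  · filter_upwards [eventually_ge_atTop 1] with m hm using (main m hm).2
end

section
/- For positive reals x₁, x₂ and positive integers ℓ₁, ℓ₂, the following limit identity holds: 1 + lim_{m→∞} (m x₁/x₂²)·( ∑_{a₁=1}^{mℓ₁−1} Ψ₂(mℓ₂ − ⌊a₁ℓ₂/ℓ₁⌋ + (m + a₁x₁)/x₂) + ∑_{a₁ ≥ mℓ₁} Ψ₂(1 + (m + a₁x₁)/x₂) ) = ℓ₁ℓ₂x₁x₂/((1+ℓ₁x₁)(1+ℓ₂x₂)), where Ψ₂(y) = −2∑_{a≥0} 1/(a+y)³. -/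
open Filter

lemma hasSum_telescope' (g : ℕ → ℝ) (hmono : ∀ n, g (n+1) ≤ g n)
    (h0 : Tendsto g atTop (nhds 0)) : HasSum (fun n => g n - g (n+1)) (g 0) := by
  have hanti : ∀ n k, n ≤ k → g k ≤ g n := by
    intro n k hk
    induction k with
    | zero => simp [Nat.le_zero.mp hk]
    | succ k ih =>
      rcases Nat.lt_or_ge n (k+1) with h | h
      · exact (hmono k).trans (ih (Nat.lt_succ_iff.mp h))
      · have : n = k + 1 := le_antisymm hk h
        simp [this]
  have hnonneg : ∀ n, 0 ≤ g n := by
    intro n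
    refine le_of_tendsto h0 ?_
    filter_upwards [eventually_ge_atTop n] with k hk using hanti n k hk
  have hterm : ∀ n, 0 ≤ g n - g (n+1) := fun n => sub_nonneg.mpr (hmono n)
  have hpart : ∀ n, ∑ i ∈ Finset.range n, (g i - g (i+1)) = g 0 - g n :=
    fun n => Finset.sum_range_sub' g n
  have hsummable : Summable (fun n => g n - g (n+1)) := by
    apply summable_of_sum_range_le hterm (c := g 0)
    intro n; rw [hpart]; linarith [hnonneg n]
  rw [hsummable.hasSum_iff_tendsto_nat]
  have : Tendsto (fun n => g 0 - g n) atTop (nhds (g 0 - 0)) :=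
    (tendsto_const_nhds).sub h0
  simp only [hpart]
  simpa using this

lemma tendsto_inv_lin (q d : ℝ) (hd : 0 < d) :
    Tendsto (fun a : ℕ => 1/(q + a*d)) atTop (nhds 0) := by
  have h1 : Tendsto (fun a : ℕ => q + (a:ℝ)*d) atTop atTop :=
    tendsto_atTop_add_const_left _ q (tendsto_natCast_atTop_atTop.atTop_mul_const hd)
  exact h1.inv_tendsto_atTop.congr (fun a => by simp [one_div, Pi.inv_apply])

lemma hasSum_lin_telescope (q d : ℝ) (hq : 0 < q) (hd : 0 < d) :
    HasSum (fun a : ℕ => 1/(q + a*d) - 1/(q + (a+1)*d)) (1/q) := by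
  have hpos : ∀ a : ℕ, (0:ℝ) < q + a*d := fun a => by positivity
  have := hasSum_telescope' (fun a => 1/(q + a*d)) (fun n => by
      apply one_div_le_one_div_of_le (hpos n)
      push_cast; nlinarith) (tendsto_inv_lin q d hd)
  simpa using this
lemma hasSum_sq_telescope (q : ℝ) (hq : 0 < q) :
    HasSum (fun a : ℕ => 1/(q + a)^2 - 1/(q + (a+1))^2) (1/q^2) := by
  have htend : Tendsto (fun a : ℕ => 1/(q + (a:ℝ))^2) atTop (nhds 0) := by
    have h1 := (tendsto_inv_lin q 1 one_pos).pow 2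
    simp only [mul_one] at h1
    simpa [div_pow] using h1
  have := hasSum_telescope' (fun a => 1/(q + a)^2) (fun n => by
      apply one_div_le_one_div_of_le (by positivity)
      push_cast; nlinarith [hq, (Nat.cast_nonneg n : (0:ℝ) ≤ n)]) htend
  simpa using this

lemma summable_inv_lin_sq (q d : ℝ) (hq : 0 < q) (hd : 0 < d) :
    Summable (fun a : ℕ => 1/(q + a*d)^2) := by
  rw [← summable_nat_add_iff 2]
  have base : Summable (fun a : ℕ => (1/d) * (1/((q+2*d)/2 + a*d) - 1/((q+2*d)/2 + (a+1)*d))) :=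
    ((hasSum_lin_telescope ((q+2*d)/2) d (by positivity) hd).summable).mul_left _
  apply Summable.of_nonneg_of_le (fun a => by positivity) (fun a => ?_) base
  have h1 : (0:ℝ) < (q+2*d)/2 + a*d := by positivity
  have h2 : (0:ℝ) < (q+2*d)/2 + (a+1)*d := by positivity
  have hid : (1/d) * (1/((q+2*d)/2 + a*d) - 1/((q+2*d)/2 + (a+1)*d))
      = 1/(((q+2*d)/2 + a*d) * ((q+2*d)/2 + (a+1)*d)) := by
    field_simp
    ring
  rw [hid]
  apply one_div_le_one_div_of_le (mul_pos h1 h2)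
  push_cast
  nlinarith [hq, hd, (Nat.cast_nonneg a : (0:ℝ) ≤ a)]

lemma summable_inv_cube (y : ℝ) (hy : 0 < y) :
    Summable (fun a : ℕ => 1/((a:ℝ) + y)^3) := by
  apply Summable.of_nonneg_of_le (fun a => by positivity) (fun a => ?_)
    ((summable_inv_lin_sq y 1 hy one_pos).mul_left (1/y))
  have h : 1/((a:ℝ)+y)^3 ≤ 1/(y*(y+(a:ℝ)*1)^2) := by
    apply one_div_le_one_div_of_le (by positivity)
    push_cast
    nlinarith [(Nat.cast_nonneg a : (0:ℝ) ≤ a), hy]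
  simpa [← one_div_mul_one_div, mul_comm] using h
lemma psi_bounds (Ψ₂ : ℝ → ℝ)
    (hΨ : ∀ y : ℝ, 0 < y → Ψ₂ y = -2 * ∑' a : ℕ, 1 / ((a : ℝ) + y) ^ 3)
    (y : ℝ) (hy : 2 ≤ y) : 1/y^2 ≤ -Ψ₂ y ∧ -Ψ₂ y ≤ 1/(y-1)^2 := by
  have hy0 : 0 < y := by linarith
  have hy1 : 0 < y - 1 := by linarith
  have hc : Summable (fun a : ℕ => 1/((a:ℝ)+y)^3) := summable_inv_cube y hy0
  have hval : -Ψ₂ y = ∑' a : ℕ, 2 * (1/((a:ℝ)+y)^3) := by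
    rw [hΨ y hy0, tsum_mul_left]; ring
  constructor
  · rw [hval, ← (hasSum_sq_telescope y hy0).tsum_eq]
    apply Summable.tsum_le_tsum ?_ (hasSum_sq_telescope y hy0).summable (hc.mul_left 2)
    intro a
    have h1 : (0:ℝ) < y + a := by positivity
    have h2 : (0:ℝ) < y + (a+1) := by positivity
    rw [div_sub_div _ _ (by positivity) (by positivity), mul_one_div,
      div_le_div_iff₀ (by positivity) (by positivity)]
    nlinarith [(Nat.cast_nonneg a : (0:ℝ) ≤ a), sq_nonneg (y + (a:ℝ))]
  · rw [hval, ← (hasSum_sq_telescope (y-1) hy1).tsum_eq]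
    apply Summable.tsum_le_tsum ?_ (hc.mul_left 2) (hasSum_sq_telescope (y-1) hy1).summable
    intro a
    have h1 : (0:ℝ) < y - 1 + a := by positivity
    have h2 : (0:ℝ) < (a:ℝ) + y := by positivity
    have hty : y - 1 + ((a:ℝ)+1) = (a:ℝ) + y := by ring
    rw [hty, mul_one_div, div_sub_div _ _ (by positivity) (by positivity),
      div_le_div_iff₀ (by positivity) (by positivity)]
    nlinarith [(Nat.cast_nonneg a : (0:ℝ) ≤ a), sq_nonneg ((a:ℝ) + y), mul_pos h1 h2]
lemma sum_Ico_telescope (c B : ℝ) : ∀ (N : ℕ), 1 ≤ N → (∀ a : ℕ, a ≤ N → 0 < c + a*B) →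
    ∑ a ∈ Finset.Ico 1 N, 1/((c + a*B)*(c + (a+1)*B)) = ((N:ℝ) - 1)/((c + B)*(c + N*B)) := by
  intro N
  induction N with
  | zero => omega
  | succ N ih =>
    intro _ h
    rcases Nat.eq_zero_or_pos N with rfl | hN
    · simp
    · rw [Finset.sum_Ico_succ_top hN, ih hN (fun a ha => h a (Nat.le_succ_of_le ha))]
      have e1 : (0:ℝ) < c + B := by have := h 1 (by omega); simpa using this
      have e2 : (0:ℝ) < c + N*B := h N (Nat.le_succ N)
      have e3 : (0:ℝ) < c + (N+1)*B := by
        have := h (N+1) le_rfl; push_cast at this; convert this using 2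
      push_cast
      rw [div_add_div _ _ (ne_of_gt (mul_pos e1 e2)) (ne_of_gt (mul_pos e2 e3)),
        div_eq_div_iff (ne_of_gt (mul_pos (mul_pos e1 e2) (mul_pos e2 e3)))
          (ne_of_gt (mul_pos e1 e3))]
      ring
set_option maxHeartbeats 8000000 in
theorem stmt16 (Ψ₂ : ℝ → ℝ)
    (hΨ : ∀ y : ℝ, 0 < y → Ψ₂ y = -2 * ∑' a : ℕ, 1 / ((a : ℝ) + y) ^ 3)
    (x₁ x₂ : ℝ) (hx₁ : 0 < x₁) (hx₂ : 0 < x₂) (ℓ₁ ℓ₂ : ℕ) (hℓ₁ : 0 < ℓ₁) (hℓ₂ : 0 < ℓ₂) :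
    ∃ L : ℝ,
      Tendsto (fun m : ℕ =>
          ((m : ℝ) * x₁ / x₂ ^ 2) *
            ((∑ a₁ ∈ Finset.Ico 1 (m * ℓ₁),
                Ψ₂ ((m * ℓ₂ : ℕ) - ((a₁ * ℓ₂ / ℓ₁ : ℕ) : ℝ) + ((m : ℝ) + a₁ * x₁) / x₂)) +
              ∑' a₁ : ℕ,
                Ψ₂ (1 + ((m : ℝ) + ((a₁ : ℝ) + (m * ℓ₁ : ℕ)) * x₁) / x₂))) atTop
        (nhds L) ∧
      1 + L = ℓ₁ * ℓ₂ * x₁ * x₂ / ((1 + ℓ₁ * x₁) * (1 + ℓ₂ * x₂)) := by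
  have hl1 : (0:ℝ) < ℓ₁ := by exact_mod_cast hℓ₁
  have hl2 : (0:ℝ) < ℓ₂ := by exact_mod_cast hℓ₂
  obtain ⟨A, hA_def⟩ : ∃ A : ℝ, A = ℓ₂ + 1/x₂ := ⟨_, rfl⟩
  obtain ⟨B, hB_def⟩ : ∃ B : ℝ, B = x₁/x₂ - ℓ₂/ℓ₁ := ⟨_, rfl⟩
  obtain ⟨d, hd_def⟩ : ∃ d : ℝ, d = x₁/x₂ := ⟨_, rfl⟩
  obtain ⟨s, hs_def⟩ : ∃ s : ℝ, s = 1 + |B| := ⟨_, rfl⟩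
  have hA : 0 < A := by rw [hA_def]; positivity
  have hd : 0 < d := by rw [hd_def]; positivity
  have hs1 : 1 ≤ s := by rw [hs_def]; nlinarith [abs_nonneg B]
  obtain ⟨γ, hγ_def⟩ : ∃ γ : ℝ, γ = (1+ℓ₁*x₁)/x₂ := ⟨_, rfl⟩
  have hγ : 0 < γ := by rw [hγ_def]; positivity
  have hAB : A + ℓ₁*B = γ := by
    rw [hγ_def, hA_def, hB_def]
    field_simp
    ring
  have hABpos : 0 < A + ℓ₁*B := by rw [hAB]; exact hγ
  obtain ⟨δ, hδ_def⟩ : ∃ δ : ℝ, δ = min A (A + ℓ₁*B) := ⟨_, rfl⟩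
  have hδ : 0 < δ := by rw [hδ_def]; exact lt_min hA hABpos
  have hδA : δ ≤ A := by rw [hδ_def]; exact min_le_left _ _
  have hδAB : δ ≤ A + ℓ₁*B := by rw [hδ_def]; exact min_le_right _ _
  obtain ⟨L, hL_def⟩ : ∃ L : ℝ, L = -((ℓ₁*x₁)/((1+ℓ₂*x₂)*(1+ℓ₁*x₁)) + 1/(1+ℓ₁*x₁)) := ⟨_, rfl⟩
  refine ⟨L, ?_, ?_⟩
  swap
  · rw [hL_def]
    have h1 : (0:ℝ) < 1 + ℓ₁*x₁ := by positivity
    have h2 : (0:ℝ) < 1 + ℓ₂*x₂ := by positivity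
    field_simp
    ring
  -- limit of main-term sequences
  have claimT1 : ∀ σ : ℝ, Tendsto (fun m : ℕ =>
      ((m:ℝ)*x₁/x₂^2) * (((m:ℝ)*ℓ₁ - 1)/(((m:ℝ)*A + σ + B)*((m:ℝ)*A + σ + (m:ℝ)*ℓ₁*B))))
      atTop (nhds ((ℓ₁*x₁)/((1+ℓ₂*x₂)*(1+ℓ₁*x₁)))) := by
    intro σ
    have hnum : Tendsto (fun m : ℕ => (ℓ₁:ℝ) - 1/(m:ℝ)) atTop (nhds ℓ₁) := by
      simpa using tendsto_const_nhds.sub (tendsto_one_div_atTop_nhds_zero_nat : Tendsto (fun n : ℕ => 1/(n:ℝ)) atTop (nhds 0))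
    have hden1 : Tendsto (fun m : ℕ => A + (σ+B)*(1/(m:ℝ))) atTop (nhds A) := by
      have := (tendsto_one_div_atTop_nhds_zero_nat.const_mul (σ+B)).const_add A
      simpa using this
    have hden2 : Tendsto (fun m : ℕ => A + ℓ₁*B + σ*(1/(m:ℝ))) atTop (nhds (A + ℓ₁*B)) := by
      have := (tendsto_one_div_atTop_nhds_zero_nat.const_mul σ).const_add (A + ℓ₁*B)
      simpa using this
    have key : Tendsto (fun m : ℕ => (x₁/x₂^2) *
        (((ℓ₁:ℝ) - 1/(m:ℝ))/((A + (σ+B)*(1/(m:ℝ)))*(A + ℓ₁*B + σ*(1/(m:ℝ))))))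
        atTop (nhds ((x₁/x₂^2)*((ℓ₁:ℝ)/(A*(A+ℓ₁*B))))) :=
      tendsto_const_nhds.mul (hnum.div (hden1.mul hden2) (by positivity))
    have hval : (x₁/x₂^2)*((ℓ₁:ℝ)/(A*(A+ℓ₁*B))) = (ℓ₁*x₁)/((1+ℓ₂*x₂)*(1+ℓ₁*x₁)) := by
      rw [hAB, hγ_def, hA_def]
      rw [div_mul_div_comm, div_eq_div_iff (by positivity) (by positivity)]
      field_simp
      ring
    rw [← hval]
    apply key.congr'
    have hev : ∀ᶠ m : ℕ in atTop, max 1 ((|σ|+|B|+1)/δ) ≤ (m:ℝ) :=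
      tendsto_natCast_atTop_atTop.eventually_ge_atTop _
    filter_upwards [hev] with m hm
    have hm1 : (1:ℝ) ≤ (m:ℝ) := le_trans (le_max_left _ _) hm
    have hm0 : (m:ℝ) ≠ 0 := by linarith
    have hmδ : |σ|+|B|+1 ≤ (m:ℝ)*δ := by
      have h2 : (|σ|+|B|+1)/δ ≤ (m:ℝ) := le_trans (le_max_right _ _) hm
      rw [div_le_iff₀ hδ] at h2; linarith
    have hD₁ : 0 < (m:ℝ)*A + σ + B := by
      nlinarith [neg_abs_le σ, neg_abs_le B,
        mul_le_mul_of_nonneg_left hδA (by linarith : (0:ℝ) ≤ (m:ℝ))]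
    have hD₂ : 0 < (m:ℝ)*A + σ + (m:ℝ)*ℓ₁*B := by
      nlinarith [neg_abs_le σ, abs_nonneg B,
        mul_le_mul_of_nonneg_left hδAB (by linarith : (0:ℝ) ≤ (m:ℝ))]
    have h4a : A + (σ+B)*(1/(m:ℝ)) = ((m:ℝ)*A + σ + B)/(m:ℝ) := by field_simp; ring
    have h4b : A + ℓ₁*B + σ*(1/(m:ℝ)) = ((m:ℝ)*A + σ + (m:ℝ)*ℓ₁*B)/(m:ℝ) := by
      field_simp; ring
    rw [h4a, h4b]
    field_simp [hD₁.ne', hD₂.ne']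
  have claimT2 : ∀ c₀ : ℝ, Tendsto (fun m : ℕ =>
      ((m:ℝ)*x₁/x₂^2) * ((1/d)*(1/(c₀ + (m:ℝ)*γ))))
      atTop (nhds (1/(1+ℓ₁*x₁))) := by
    intro c₀
    have key : Tendsto (fun m : ℕ => (x₁/(x₂^2*d)) * (1/(c₀*(1/(m:ℝ)) + γ)))
        atTop (nhds ((x₁/(x₂^2*d)) * (1/γ))) := by
      have h1 : Tendsto (fun m : ℕ => c₀*(1/(m:ℝ)) + γ) atTop (nhds γ) := by
        have h0 := (tendsto_one_div_atTop_nhds_zero_nat.const_mul c₀).add_const γ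
        simpa using h0
      simpa [one_div] using tendsto_const_nhds.mul (h1.inv₀ hγ.ne')
    have hval : (x₁/(x₂^2*d)) * (1/γ) = 1/(1+ℓ₁*x₁) := by
      rw [hd_def, hγ_def]
      have h5 : (0:ℝ) < 1 + ℓ₁*x₁ := by positivity
      rw [mul_one_div, div_div, div_eq_div_iff (by positivity) (by positivity)]
      field_simp
    rw [← hval]
    apply key.congr'
    have hev : ∀ᶠ m : ℕ in atTop, max 1 ((|c₀|+1)/γ) ≤ (m:ℝ) :=
      tendsto_natCast_atTop_atTop.eventually_ge_atTop _
    filter_upwards [hev] with m hm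
    have hm1 : (1:ℝ) ≤ (m:ℝ) := le_trans (le_max_left _ _) hm
    have hm0 : (m:ℝ) ≠ 0 := by linarith
    have hden : 0 < c₀ + (m:ℝ)*γ := by
      have h2 : (|c₀|+1)/γ ≤ (m:ℝ) := le_trans (le_max_right _ _) hm
      have h3 : |c₀|+1 ≤ (m:ℝ)*γ := by rw [div_le_iff₀ hγ] at h2; linarith
      have := neg_abs_le c₀; linarith
    have h4 : c₀*(1/(m:ℝ)) + γ = (c₀ + (m:ℝ)*γ)/(m:ℝ) := by field_simp
    have h5 := hden.ne'
    rw [h4, one_div_div]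
    field_simp
  have hlo : Tendsto (fun m : ℕ => -(((m:ℝ)*x₁/x₂^2) *
      (((m:ℝ)*ℓ₁ - 1)/(((m:ℝ)*A - s + B)*((m:ℝ)*A - s + (m:ℝ)*ℓ₁*B)))
      + ((m:ℝ)*x₁/x₂^2) * ((1/d)*(1/(-d + (m:ℝ)*γ))))) atTop (nhds L) := by
    have := ((claimT1 (-s)).add (claimT2 (-d))).neg
    rw [hL_def]
    convert this using 2 <;> ring
  have hhi : Tendsto (fun m : ℕ => -(((m:ℝ)*x₁/x₂^2) *
      (((m:ℝ)*ℓ₁ - 1)/(((m:ℝ)*A + s + B)*((m:ℝ)*A + s + (m:ℝ)*ℓ₁*B)))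
      + ((m:ℝ)*x₁/x₂^2) * ((1/d)*(1/(1 + (m:ℝ)*γ))))) atTop (nhds L) := by
    have := ((claimT1 s).add (claimT2 1)).neg
    rw [hL_def]
    convert this using 2 <;> ring
  have hkey : ∀ᶠ m : ℕ in atTop,
      (-(((m:ℝ)*x₁/x₂^2) *
        (((m:ℝ)*ℓ₁ - 1)/(((m:ℝ)*A - s + B)*((m:ℝ)*A - s + (m:ℝ)*ℓ₁*B)))
        + ((m:ℝ)*x₁/x₂^2) * ((1/d)*(1/(-d + (m:ℝ)*γ))))
      ≤ ((m : ℝ) * x₁ / x₂ ^ 2) *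
          ((∑ a₁ ∈ Finset.Ico 1 (m * ℓ₁),
              Ψ₂ ((m * ℓ₂ : ℕ) - ((a₁ * ℓ₂ / ℓ₁ : ℕ) : ℝ) + ((m : ℝ) + a₁ * x₁) / x₂)) +
            ∑' a₁ : ℕ, Ψ₂ (1 + ((m : ℝ) + ((a₁ : ℝ) + (m * ℓ₁ : ℕ)) * x₁) / x₂))
      ∧ ((m : ℝ) * x₁ / x₂ ^ 2) *
          ((∑ a₁ ∈ Finset.Ico 1 (m * ℓ₁),
              Ψ₂ ((m * ℓ₂ : ℕ) - ((a₁ * ℓ₂ / ℓ₁ : ℕ) : ℝ) + ((m : ℝ) + a₁ * x₁) / x₂)) +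
            ∑' a₁ : ℕ, Ψ₂ (1 + ((m : ℝ) + ((a₁ : ℝ) + (m * ℓ₁ : ℕ)) * x₁) / x₂))
      ≤ -(((m:ℝ)*x₁/x₂^2) *
        (((m:ℝ)*ℓ₁ - 1)/(((m:ℝ)*A + s + B)*((m:ℝ)*A + s + (m:ℝ)*ℓ₁*B)))
        + ((m:ℝ)*x₁/x₂^2) * ((1/d)*(1/(1 + (m:ℝ)*γ))))) := by
    have hev1 : ∀ᶠ m : ℕ in atTop, (s+2)/δ ≤ (m:ℝ) :=
      tendsto_natCast_atTop_atTop.eventually_ge_atTop _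
    have hev2 : ∀ᶠ m : ℕ in atTop, (2+d)*x₂ ≤ (m:ℝ) :=
      tendsto_natCast_atTop_atTop.eventually_ge_atTop _
    have hev3 : ∀ᶠ m : ℕ in atTop, 1 ≤ m := eventually_ge_atTop 1
    filter_upwards [hev1, hev2, hev3] with m h1 h2 h3
    have hM1 : (1:ℝ) ≤ (m:ℝ) := by exact_mod_cast h3
    have hM0 : (0:ℝ) < (m:ℝ) := by linarith
    have hMδ : s + 2 ≤ (m:ℝ)*δ := by rw [div_le_iff₀ hδ] at h1; linarith
    have hN1 : 1 ≤ m*ℓ₁ := Nat.one_le_iff_ne_zero.mpr (Nat.mul_ne_zero (by omega) (by omega))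
    have hNcast : ((m*ℓ₁:ℕ):ℝ) = (m:ℝ)*ℓ₁ := by push_cast; ring
    have hw : ∀ a : ℕ, a ≤ m*ℓ₁ → (m:ℝ)*δ ≤ (m:ℝ)*A + (a:ℝ)*B := by
      intro a ha
      have hacast : (a:ℝ) ≤ (m:ℝ)*ℓ₁ := by rw [← hNcast]; exact_mod_cast ha
      have h0a : (0:ℝ) ≤ (a:ℝ) := Nat.cast_nonneg a
      rcases le_or_gt 0 B with hB | hB
      · nlinarith [mul_le_mul_of_nonneg_left hδA (le_of_lt hM0)]
      · nlinarith [mul_le_mul_of_nonneg_left hδAB (le_of_lt hM0),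
          mul_nonneg (sub_nonneg.mpr hacast) (le_of_lt (neg_pos.mpr hB))]
    have hterm : ∀ a : ℕ, a ∈ Finset.Ico 1 (m*ℓ₁) →
        (-(1/((((m:ℝ)*A - s) + (a:ℝ)*B)*(((m:ℝ)*A - s) + ((a:ℝ)+1)*B)))
          ≤ Ψ₂ ((m * ℓ₂ : ℕ) - ((a * ℓ₂ / ℓ₁ : ℕ) : ℝ) + ((m : ℝ) + a * x₁) / x₂)
        ∧ Ψ₂ ((m * ℓ₂ : ℕ) - ((a * ℓ₂ / ℓ₁ : ℕ) : ℝ) + ((m : ℝ) + a * x₁) / x₂)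
          ≤ -(1/((((m:ℝ)*A + s) + (a:ℝ)*B)*(((m:ℝ)*A + s) + ((a:ℝ)+1)*B)))) := by
      intro a ha
      obtain ⟨ha1, ha2⟩ := Finset.mem_Ico.mp ha
      have hwa := hw a (le_of_lt ha2)
      have hwa1 : (m:ℝ)*δ ≤ (m:ℝ)*A + ((a:ℝ)+1)*B := by
        have := hw (a+1) ha2
        push_cast at this
        linarith
      have hq1 : ((a*ℓ₂/ℓ₁ : ℕ):ℝ) ≤ (a:ℝ)*ℓ₂/ℓ₁ := by
        have h := Nat.cast_div_le (m := a*ℓ₂) (n := ℓ₁) (α := ℝ)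
        push_cast at h
        exact h
      have hq2 : (a:ℝ)*ℓ₂/ℓ₁ - 1 ≤ ((a*ℓ₂/ℓ₁ : ℕ):ℝ) := by
        have hlt : a*ℓ₂ < ℓ₁*(a*ℓ₂/ℓ₁) + ℓ₁ := by
          have h5 := Nat.div_add_mod (a*ℓ₂) ℓ₁
          have h6 := Nat.mod_lt (a*ℓ₂) hℓ₁
          omega
        have hcast : (a:ℝ)*ℓ₂ < (ℓ₁:ℝ)*((a*ℓ₂/ℓ₁ : ℕ):ℝ) + ℓ₁ := by exact_mod_cast hlt
        rw [sub_le_iff_le_add, div_le_iff₀ hl1]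
        nlinarith
      have hyl : (m:ℝ)*A + (a:ℝ)*B
          ≤ ((m*ℓ₂:ℕ):ℝ) - ((a*ℓ₂/ℓ₁ : ℕ):ℝ) + ((m:ℝ) + (a:ℝ)*x₁)/x₂ := by
        rw [hA_def, hB_def]
        push_cast
        have e : (m:ℝ)*((ℓ₂:ℝ)+1/x₂) + (a:ℝ)*(x₁/x₂ - (ℓ₂:ℝ)/(ℓ₁:ℝ))
            = (m:ℝ)*ℓ₂ + ((m:ℝ)+(a:ℝ)*x₁)/x₂ - (a:ℝ)*ℓ₂/ℓ₁ := by ring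
        linarith [hq1, e]
      have hyu : ((m*ℓ₂:ℕ):ℝ) - ((a*ℓ₂/ℓ₁ : ℕ):ℝ) + ((m:ℝ) + (a:ℝ)*x₁)/x₂
          ≤ (m:ℝ)*A + (a:ℝ)*B + 1 := by
        rw [hA_def, hB_def]
        push_cast
        have e : (m:ℝ)*((ℓ₂:ℝ)+1/x₂) + (a:ℝ)*(x₁/x₂ - (ℓ₂:ℝ)/(ℓ₁:ℝ))
            = (m:ℝ)*ℓ₂ + ((m:ℝ)+(a:ℝ)*x₁)/x₂ - (a:ℝ)*ℓ₂/ℓ₁ := by ring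
        linarith [hq2, e]
      obtain ⟨ya, hya_def⟩ : ∃ ya : ℝ,
          ya = ((m*ℓ₂:ℕ):ℝ) - ((a*ℓ₂/ℓ₁ : ℕ):ℝ) + ((m:ℝ) + (a:ℝ)*x₁)/x₂ := ⟨_, rfl⟩
      rw [← hya_def] at hyl hyu ⊢
      have hy2 : 2 ≤ ya := by linarith [hwa, hMδ, hs1]
      have hpsi := psi_bounds Ψ₂ hΨ ya hy2
      have hyaPos : (0:ℝ) < ya := by linarith
      have habsB : -|B| ≤ B := neg_abs_le B
      have habsB' : B ≤ |B| := le_abs_self B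
      have hsB : s = 1 + |B| := hs_def
      constructor
      · have hP : 0 < ((m:ℝ)*A - s) + (a:ℝ)*B := by linarith
        have hQ : 0 < ((m:ℝ)*A - s) + ((a:ℝ)+1)*B := by linarith
        have hPy : ((m:ℝ)*A - s) + (a:ℝ)*B ≤ ya - 1 := by linarith
        have hQy : ((m:ℝ)*A - s) + ((a:ℝ)+1)*B ≤ ya - 1 := by linarith
        have hprod : (((m:ℝ)*A - s) + (a:ℝ)*B)*(((m:ℝ)*A - s) + ((a:ℝ)+1)*B) ≤ (ya-1)^2 := by
          rw [pow_two]
          exact mul_le_mul hPy hQy hQ.le (by linarith)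
        have hfrac : 1/(ya-1)^2
            ≤ 1/((((m:ℝ)*A - s) + (a:ℝ)*B)*(((m:ℝ)*A - s) + ((a:ℝ)+1)*B)) :=
          one_div_le_one_div_of_le (mul_pos hP hQ) hprod
        linarith [hpsi.2]
      · have hP : 0 < ((m:ℝ)*A + s) + (a:ℝ)*B := by linarith
        have hQ : 0 < ((m:ℝ)*A + s) + ((a:ℝ)+1)*B := by linarith
        have hPy : ya ≤ ((m:ℝ)*A + s) + (a:ℝ)*B := by linarith
        have hQy : ya ≤ ((m:ℝ)*A + s) + ((a:ℝ)+1)*B := by linarith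
        have hprod : ya^2 ≤ (((m:ℝ)*A + s) + (a:ℝ)*B)*(((m:ℝ)*A + s) + ((a:ℝ)+1)*B) := by
          rw [pow_two]
          exact mul_le_mul hPy hQy hyaPos.le (by linarith)
        have hfrac := one_div_le_one_div_of_le (pow_pos hyaPos 2) hprod
        linarith [hpsi.1]
    have hS1ub : (∑ a₁ ∈ Finset.Ico 1 (m * ℓ₁),
          Ψ₂ ((m * ℓ₂ : ℕ) - ((a₁ * ℓ₂ / ℓ₁ : ℕ) : ℝ) + ((m : ℝ) + a₁ * x₁) / x₂))
        ≤ -(((m:ℝ)*ℓ₁ - 1)/(((m:ℝ)*A + s + B)*((m:ℝ)*A + s + (m:ℝ)*ℓ₁*B))) := by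
      have h := Finset.sum_le_sum (fun a ha => (hterm a ha).2)
      rw [Finset.sum_neg_distrib,
        sum_Ico_telescope ((m:ℝ)*A + s) B (m*ℓ₁) hN1
          (fun a ha => by have := hw a ha; linarith), hNcast] at h
      exact h
    have hS1lb : -(((m:ℝ)*ℓ₁ - 1)/(((m:ℝ)*A - s + B)*((m:ℝ)*A - s + (m:ℝ)*ℓ₁*B)))
        ≤ (∑ a₁ ∈ Finset.Ico 1 (m * ℓ₁),
          Ψ₂ ((m * ℓ₂ : ℕ) - ((a₁ * ℓ₂ / ℓ₁ : ℕ) : ℝ) + ((m : ℝ) + a₁ * x₁) / x₂)) := by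
      have h := Finset.sum_le_sum (fun a ha => (hterm a ha).1)
      rw [Finset.sum_neg_distrib,
        sum_Ico_telescope ((m:ℝ)*A - s) B (m*ℓ₁) hN1
          (fun a ha => by have := hw a ha; linarith), hNcast] at h
      exact h
    -- tail part
    obtain ⟨Z, hZ_def⟩ : ∃ Z : ℝ, Z = 1 + ((m:ℝ) + ((m*ℓ₁:ℕ):ℝ)*x₁)/x₂ := ⟨_, rfl⟩
    have hZd : ∀ a : ℕ, (1 + ((m:ℝ) + ((a:ℝ) + ((m*ℓ₁:ℕ):ℝ))*x₁)/x₂)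
        = Z + (a:ℝ)*d := by
      intro a; rw [hZ_def, hd_def]; ring
    have hZlb : 3 + d ≤ Z := by
      have h2' : 2 + d ≤ (m:ℝ)/x₂ := by rw [le_div_iff₀ hx₂]; linarith
      have h2'' : (m:ℝ)/x₂ ≤ ((m:ℝ) + ((m*ℓ₁:ℕ):ℝ)*x₁)/x₂ :=
        (div_le_div_iff_of_pos_right hx₂).mpr (le_add_of_nonneg_right (by positivity))
      rw [hZ_def]; linarith
    have hZ2 : (0:ℝ) < Z - 1 - d := by linarith
    have hzge : ∀ a : ℕ, 2 ≤ Z + (a:ℝ)*d := by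
      intro a
      linarith [mul_nonneg (Nat.cast_nonneg a : (0:ℝ) ≤ a) hd.le]
    have hpsiz := fun a : ℕ => psi_bounds Ψ₂ hΨ (Z + (a:ℝ)*d) (hzge a)
    have htele_up := hasSum_lin_telescope (Z-1-d) d hZ2 hd
    have htele_lo := hasSum_lin_telescope Z d (by linarith) hd
    have hpos1 : ∀ a : ℕ, (0:ℝ) < (Z-1-d) + (a:ℝ)*d := by
      intro a; linarith [mul_nonneg (Nat.cast_nonneg a : (0:ℝ) ≤ a) hd.le]
    have hpos2 : ∀ a : ℕ, (0:ℝ) < (Z-1) + (a:ℝ)*d := by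
      intro a; linarith [mul_nonneg (Nat.cast_nonneg a : (0:ℝ) ≤ a) hd.le]
    have hpos3 : ∀ a : ℕ, (0:ℝ) < Z + (a:ℝ)*d := by
      intro a; linarith [mul_nonneg (Nat.cast_nonneg a : (0:ℝ) ≤ a) hd.le]
    have hpsi_le : ∀ a : ℕ, -Ψ₂ (Z + (a:ℝ)*d)
        ≤ (1/d)*(1/((Z-1-d) + (a:ℝ)*d) - 1/((Z-1-d) + ((a:ℝ)+1)*d)) := by
      intro a
      have hid : (1/d)*(1/((Z-1-d) + (a:ℝ)*d) - 1/((Z-1-d) + ((a:ℝ)+1)*d))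
          = 1/(((Z-1-d) + (a:ℝ)*d)*((Z-1) + (a:ℝ)*d)) := by
        have e : (Z-1-d) + ((a:ℝ)+1)*d = (Z-1) + (a:ℝ)*d := by ring
        rw [e]
        rw [div_sub_div _ _ (hpos1 a).ne' (hpos2 a).ne',
          show (1:ℝ)*((Z-1) + (a:ℝ)*d) - ((Z-1-d) + (a:ℝ)*d)*1 = d by ring,
          ← mul_div_assoc, one_div_mul_cancel hd.ne']
      rw [hid]
      have e2 : Z + (a:ℝ)*d - 1 = (Z-1) + (a:ℝ)*d := by ring
      have hfrac : 1/(Z + (a:ℝ)*d - 1)^2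
          ≤ 1/(((Z-1-d) + (a:ℝ)*d)*((Z-1) + (a:ℝ)*d)) := by
        apply one_div_le_one_div_of_le (mul_pos (hpos1 a) (hpos2 a))
        rw [e2]
        nlinarith [hpos1 a, hpos2 a]
      linarith [(hpsiz a).2, hfrac]
    have hSummNeg : Summable (fun a : ℕ => -Ψ₂ (Z + (a:ℝ)*d)) := by
      apply Summable.of_nonneg_of_le (fun a => ?_) hpsi_le (htele_up.summable.mul_left _)
      have := (hpsiz a).1
      have h7 : (0:ℝ) < 1/(Z + (a:ℝ)*d)^2 := by
        have := hpos3 a; positivity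
      linarith
    have hSumm : Summable (fun a : ℕ => Ψ₂ (Z + (a:ℝ)*d)) := by
      have := hSummNeg.neg; simpa using this
    have hS2ub' : ∑' a : ℕ, -Ψ₂ (Z + (a:ℝ)*d) ≤ (1/d)*(1/(Z-1-d)) := by
      rw [← (htele_up.mul_left (1/d)).tsum_eq]
      exact Summable.tsum_le_tsum hpsi_le hSummNeg ((htele_up.mul_left (1/d)).summable)
    have hS2lb' : (1/d)*(1/Z) ≤ ∑' a : ℕ, -Ψ₂ (Z + (a:ℝ)*d) := by
      rw [← (htele_lo.mul_left (1/d)).tsum_eq]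
      apply Summable.tsum_le_tsum ?_ ((htele_lo.mul_left (1/d)).summable) hSummNeg
      intro a
      have hid : (1/d)*(1/(Z + (a:ℝ)*d) - 1/(Z + ((a:ℝ)+1)*d))
          = 1/((Z + (a:ℝ)*d)*(Z + ((a:ℝ)+1)*d)) := by
        have p2 : (0:ℝ) < Z + ((a:ℝ)+1)*d := by
          nlinarith [mul_nonneg (Nat.cast_nonneg a : (0:ℝ) ≤ a) hd.le, hd, hZlb]
        rw [div_sub_div _ _ (hpos3 a).ne' p2.ne',
          show (1:ℝ)*(Z + ((a:ℝ)+1)*d) - (Z + (a:ℝ)*d)*1 = d by ring,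
          ← mul_div_assoc, one_div_mul_cancel hd.ne']
      rw [hid]
      have p2 : (0:ℝ) < Z + ((a:ℝ)+1)*d := by
        nlinarith [mul_nonneg (Nat.cast_nonneg a : (0:ℝ) ≤ a) hd.le, hd, hZlb]
      have hfrac : 1/((Z + (a:ℝ)*d)*(Z + ((a:ℝ)+1)*d)) ≤ 1/(Z + (a:ℝ)*d)^2 := by
        apply one_div_le_one_div_of_le (pow_pos (hpos3 a) 2)
        nlinarith [hpos3 a]
      linarith [(hpsiz a).1, hfrac]
    have htsum_neg : ∑' a : ℕ, -Ψ₂ (Z + (a:ℝ)*d) = -∑' a : ℕ, Ψ₂ (Z + (a:ℝ)*d) :=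
      tsum_neg
    have hfun : (∑' a₁ : ℕ, Ψ₂ (1 + ((m:ℝ) + ((a₁:ℝ) + ((m*ℓ₁:ℕ):ℝ))*x₁)/x₂))
        = ∑' a : ℕ, Ψ₂ (Z + (a:ℝ)*d) := tsum_congr (fun a => by rw [hZd a])
    have hcoef : (0:ℝ) ≤ (m:ℝ)*x₁/x₂^2 := by positivity
    have eZ1 : Z = 1 + (m:ℝ)*γ := by rw [hZ_def, hγ_def, hNcast]; ring
    have eZ2 : Z - 1 - d = -d + (m:ℝ)*γ := by rw [eZ1]; ring
    constructor
    · have t2 : -((1/d)*(1/(-d + (m:ℝ)*γ)))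
          ≤ ∑' a₁ : ℕ, Ψ₂ (1 + ((m:ℝ) + ((a₁:ℝ) + ((m*ℓ₁:ℕ):ℝ))*x₁)/x₂) := by
        rw [hfun, ← eZ2]
        rw [htsum_neg] at hS2ub'
        linarith
      have hsum : -((((m:ℝ)*ℓ₁ - 1)/(((m:ℝ)*A - s + B)*((m:ℝ)*A - s + (m:ℝ)*ℓ₁*B)))
            + (1/d)*(1/(-d + (m:ℝ)*γ)))
          ≤ (∑ a₁ ∈ Finset.Ico 1 (m * ℓ₁),
              Ψ₂ ((m * ℓ₂ : ℕ) - ((a₁ * ℓ₂ / ℓ₁ : ℕ) : ℝ) + ((m : ℝ) + a₁ * x₁) / x₂))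
            + ∑' a₁ : ℕ, Ψ₂ (1 + ((m:ℝ) + ((a₁:ℝ) + ((m*ℓ₁:ℕ):ℝ))*x₁)/x₂) := by
        linarith [hS1lb, t2]
      have hmul := mul_le_mul_of_nonneg_left hsum hcoef
      exact le_trans (le_of_eq (by ring)) hmul
    · have t2 : (∑' a₁ : ℕ, Ψ₂ (1 + ((m:ℝ) + ((a₁:ℝ) + ((m*ℓ₁:ℕ):ℝ))*x₁)/x₂))
          ≤ -((1/d)*(1/(1 + (m:ℝ)*γ))) := by
        rw [hfun, ← eZ1]
        rw [htsum_neg] at hS2lb'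
        linarith
      have hsum : (∑ a₁ ∈ Finset.Ico 1 (m * ℓ₁),
              Ψ₂ ((m * ℓ₂ : ℕ) - ((a₁ * ℓ₂ / ℓ₁ : ℕ) : ℝ) + ((m : ℝ) + a₁ * x₁) / x₂))
            + (∑' a₁ : ℕ, Ψ₂ (1 + ((m:ℝ) + ((a₁:ℝ) + ((m*ℓ₁:ℕ):ℝ))*x₁)/x₂))
          ≤ -((((m:ℝ)*ℓ₁ - 1)/(((m:ℝ)*A + s + B)*((m:ℝ)*A + s + (m:ℝ)*ℓ₁*B)))
            + (1/d)*(1/(1 + (m:ℝ)*γ))) := by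
        linarith [hS1ub, t2]
      have hmul := mul_le_mul_of_nonneg_left hsum hcoef
      exact le_trans hmul (le_of_eq (by ring))
  exact tendsto_of_tendsto_of_tendsto_of_le_of_le' hlo hhi
    (hkey.mono fun m h => h.1) (hkey.mono fun m h => h.2)
end
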